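/- arXiv:2101.07247 — 2 statements merged into one kernel-verified Lean document; each statement's English description precedes it below -/
import Mathlib

section
/- In the graph G obtained from the infinite binary tree T₂ by adding, for each rooted ray R ⊆ T₂, a new ray R′ (pairwise disjoint for distinct rooted rays) whose first vertex v_{R′} is joined to all vertices of R, the two rays R′ and v_{R′}R are directional, and the ends represented by R and by R′ are distinct ends of G. -/
/-! Common definitions: rays, ends (à la Halin), the end space, directions
(via Mathlib's `SimpleGraph.end`), domination, generalised paths, etc. -/

open Classical SimpleGraph

universe u

variable {V : Type u}

/-- A ray in `G`: a one-way infinite path. -/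
structure Ray (G : SimpleGraph V) where
  f : ℕ → V
  inj : Function.Injective f
  adj : ∀ n, G.Adj (f n) (f (n + 1))

namespace Ray

variable {G : SimpleGraph V}

/-- `R` has a tail inside the vertex set `S`. -/
def TailIn (R : Ray G) (S : Set V) : Prop :=
  ∃ N, ∀ n, N ≤ n → R.f n ∈ S

/-- The set of the first `n` vertices of `R`. -/
noncomputable def initSeg (R : Ray G) (n : ℕ) : Finset V :=
  (Finset.range n).image R.f

end Ray

/-- Two rays are equivalent if no finite vertex set separates them, i.e. for
every finite `X` they have tails in a common component of `G - X`. -/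
def RayEquiv (G : SimpleGraph V) (R S : Ray G) : Prop :=
  ∀ X : Finset V, ∃ C : G.ComponentCompl (X : Set V), R.TailIn C ∧ S.TailIn C

/-- The ends of `G` in the sense of Halin: equivalence classes of rays. -/
def Ends (G : SimpleGraph V) : Type u :=
  { ω : Set (Ray G) // ∃ R : Ray G, ω = { S | RayEquiv G R S } }

/-- The end of a ray. -/
def Ray.end (G : SimpleGraph V) (R : Ray G) : Ends G :=
  ⟨{ S | RayEquiv G R S }, R, rfl⟩

/-- The end `ω` lives in the component `C` of `G - X`:  every ray in `ω` has a
tail in `C`.  (For genuine ends this is the statement `C = C(X,ω)`.) -/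
def LivesIn {G : SimpleGraph V} (ω : Ends G) (X : Finset V)
    (C : G.ComponentCompl (X : Set V)) : Prop :=
  ∀ R ∈ ω.1, R.TailIn C

/-- The basic open set `Ω(X,C)` of the end space. -/
def basicSet (G : SimpleGraph V) (X : Finset V) (C : G.ComponentCompl (X : Set V)) :
    Set (Ends G) :=
  { ω | LivesIn ω X C }

/-- The end space: the topology on `Ends G` generated by the sets `Ω(X,C)`. -/
instance endsTopology (G : SimpleGraph V) : TopologicalSpace (Ends G) :=
  TopologicalSpace.generateFrom
    { U | ∃ (X : Finset V) (C : G.ComponentCompl (X : Set V)), U = basicSet G X C }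

section Directions

/-- The component `f(X)` chosen by the direction `f` at the finite vertex set `X`. -/
def dirComp {G : SimpleGraph V} (f : G.end) (X : Finset V) : G.ComponentCompl (X : Set V) :=
  f.1 (Opposite.op X)


variable (G : SimpleGraph V)

/-- The ray `R` induces the direction `f` (i.e. `f = f_ω` for the end `ω` of `R`):
for every finite `X`, the component `f(X)` contains a tail of `R`. -/
def InducesDir {G : SimpleGraph V} (R : Ray G) (f : G.end) : Prop :=
  ∀ X : Finset V, R.TailIn (dirComp f X : Set V)

/-- The end `ω` induces the direction `f`, i.e. `f = f_ω`. -/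
def EndInducesDir {G : SimpleGraph V} (ω : Ends G) (f : G.end) : Prop :=
  ∀ (X : Finset V), ∀ R ∈ ω.1, R.TailIn (dirComp f X : Set V)

/-- A direction `f` is countably determined in `G` if some countable set of
directional choices `(X, C)` distinguishes `f` from every other direction. -/
def DirCountablyDetermined {G : SimpleGraph V} (f : G.end) : Prop :=
  ∃ D : Set ((X : Finset V) × G.ComponentCompl (X : Set V)), D.Countable ∧
    ∀ h : G.end, h ≠ f → ∃ p ∈ D,
      dirComp f p.1 = p.2 ∧ dirComp h p.1 ≠ p.2

/-- `G` is countably determined: some countable set of directional choices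
distinguishes every two distinct directions of `G` from each other. -/
def GraphCountablyDetermined (G : SimpleGraph V) : Prop :=
  ∃ D : Set ((X : Finset V) × G.ComponentCompl (X : Set V)), D.Countable ∧
    ∀ f h : G.end, f ≠ h → ∃ p ∈ D,
      (dirComp f p.1 = p.2 ∧ dirComp h p.1 ≠ p.2) ∨
      (dirComp h p.1 = p.2 ∧ dirComp f p.1 ≠ p.2)

/-- `R` is directional in `G`: the directional choices given by the finite
initial segments of `R` distinguish the direction induced by `R` from every
other direction of `G`. -/
def Directional {G : SimpleGraph V} (R : Ray G) : Prop :=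
  ∀ h : G.end, (∃ X : Finset V, ¬ R.TailIn (dirComp h X : Set V)) →
    ∃ n : ℕ, ¬ R.TailIn (dirComp h (R.initSeg n) : Set V)

/-- `R` is topological in `G`: the basic open sets `Ω(X_n, ω)`, for `X_n` the
first `n` vertices of `R` and `ω` the end of `R`, form a neighbourhood base at
`ω` in the end space of `G`. -/
def Topological {G : SimpleGraph V} (R : Ray G) : Prop :=
  ∀ U : Set (Ends G), IsOpen U → R.end G ∈ U →
    ∃ (n : ℕ) (C : G.ComponentCompl (R.initSeg n : Set V)),
      LivesIn (R.end G) (R.initSeg n) C ∧ basicSet G (R.initSeg n) C ⊆ U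

end Directions

section Domination

variable (G : SimpleGraph V)

/-- `v` dominates the ray `R`: no finite vertex set avoiding `v` separates `v`
from `R` (equivalently, there is an infinite `v`–`R` fan). -/
def DominatesRay (v : V) (R : Ray G) : Prop :=
  ∀ X : Finset V, v ∉ X → ∃ (u : V) (W : G.Walk v u),
    (∃ n, R.f n = u) ∧ ∀ w ∈ W.support, w ∉ (X : Set V)

/-- `v` dominates the end `ω`. -/
def DominatesEnd (v : V) (ω : Ends G) : Prop :=
  ∀ R ∈ ω.1, DominatesRay G v R

end Domination

/-- A double ray in `G`. -/
structure DoubleRay (G : SimpleGraph V) where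
  f : ℤ → V
  inj : Function.Injective f
  adj : ∀ n : ℤ, G.Adj (f n) (f (n + 1))

namespace DoubleRay

variable {G : SimpleGraph V}

/-- The positive tail of `D` lies in the end `ω`. -/
def PosTailIn (D : DoubleRay G) (ω : Ends G) : Prop :=
  ∃ R ∈ ω.1, ∃ N : ℤ, ∀ n : ℕ, R.f n = D.f (N + n)

/-- The negative tail of `D` lies in the end `ω`. -/
def NegTailIn (D : DoubleRay G) (ω : Ends G) : Prop :=
  ∃ R ∈ ω.1, ∃ N : ℤ, ∀ n : ℕ, R.f n = D.f (N - n)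

end DoubleRay

/-- `P` is (the vertex set of) a generalised path in `G` with endpoints
`ω₁ ≠ ω₂`. -/
def IsGenPath (G : SimpleGraph V) (P : Set V) (ω₁ ω₂ : Ends G) : Prop :=
  (∃ D : DoubleRay G, P = Set.range D.f ∧
    ((D.PosTailIn ω₁ ∧ D.NegTailIn ω₂) ∨ (D.PosTailIn ω₂ ∧ D.NegTailIn ω₁))) ∨
  (∃ (u v : V) (W : G.Walk u v), W.IsPath ∧ P = { x | x ∈ W.support } ∧
    ((DominatesEnd G u ω₁ ∧ DominatesEnd G v ω₂) ∨
     (DominatesEnd G u ω₂ ∧ DominatesEnd G v ω₁))) ∨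
  (∃ R : Ray G, P = Set.range R.f ∧
    ((R ∈ ω₁.1 ∧ DominatesEnd G (R.f 0) ω₂) ∨
     (R ∈ ω₂.1 ∧ DominatesEnd G (R.f 0) ω₁)))

/-- A sun in `G` centred at `ω`: pairwise vertex-disjoint generalised paths
`(P i, {ω, leaf i})` with pairwise distinct leaves `leaf i ≠ ω`, where either
all the `P i` are double rays with one tail in `leaf i` and another in `ω`, or
all the `P i` are rays in `leaf i` whose first vertices dominate `ω`. -/
def IsSun (G : SimpleGraph V) (ω : Ends G) {I : Type*}
    (P : I → Set V) (leaf : I → Ends G) : Prop :=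
  (∀ i j, i ≠ j → Disjoint (P i) (P j)) ∧ Function.Injective leaf ∧
  (∀ i, leaf i ≠ ω) ∧
  ((∀ i, ∃ D : DoubleRay G, P i = Set.range D.f ∧
      ((D.PosTailIn (leaf i) ∧ D.NegTailIn ω) ∨
       (D.PosTailIn ω ∧ D.NegTailIn (leaf i)))) ∨
   (∀ i, ∃ R : Ray G, P i = Set.range R.f ∧ R ∈ (leaf i).1 ∧
      DominatesEnd G (R.f 0) ω))


/-- The first `n` values of `σ` as a list: the `n`-th vertex of the rooted ray
of the binary tree corresponding to `σ`. -/
def pre2 (σ : ℕ → Bool) : ℕ → List Bool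
  | 0 => []
  | n + 1 => pre2 σ n ++ [σ n]

lemma pre2_length (σ : ℕ → Bool) (n : ℕ) : (pre2 σ n).length = n := by
  induction n with
  | zero => rfl
  | succ n ih => simp [pre2, ih]

/-- Vertices: the binary tree `T₂` (finite 0-1 sequences) together with, for
every rooted ray `σ` of `T₂`, the vertices `(σ, n)` of the new ray `R'_σ`. -/
abbrev BTV : Type := List Bool ⊕ ((ℕ → Bool) × ℕ)

/-- Edges: tree edges of `T₂`; ray edges of each `R'_σ`; and the first vertex
`(σ, 0)` of `R'_σ` joined to every vertex of the rooted ray `R_σ`. -/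
def btRel : BTV → BTV → Prop := fun x y =>
  (∃ (s : List Bool) (b : Bool), x = Sum.inl s ∧ y = Sum.inl (s ++ [b])) ∨
  (∃ (σ : ℕ → Bool) (n : ℕ), x = Sum.inr (σ, n) ∧ y = Sum.inr (σ, n + 1)) ∨
  (∃ (σ : ℕ → Bool) (n : ℕ), x = Sum.inr (σ, 0) ∧ y = Sum.inl (pre2 σ n))

/-- The graph of Example 4.1. -/
def GBT : SimpleGraph BTV := SimpleGraph.fromRel btRel

/-- The rooted ray `R_σ` of `T₂` inside `GBT`. -/
def rayR (σ : ℕ → Bool) : Ray GBT where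
  f n := Sum.inl (pre2 σ n)
  inj := by
    intro a b h
    have := congrArg (fun x : BTV => (Sum.elim List.length (fun _ => 0)) x) h
    simpa [pre2_length] using this
  adj n := (SimpleGraph.fromRel_adj btRel _ _).mpr
    ⟨by
      intro h
      have := congrArg (fun x : BTV => (Sum.elim List.length (fun _ => 0)) x) h
      simp [pre2_length] at this,
     Or.inl (Or.inl ⟨pre2 σ n, σ n, rfl, rfl⟩)⟩

/-- The new ray `R'_σ` of `GBT`. -/
def rayR' (σ : ℕ → Bool) : Ray GBT where
  f n := Sum.inr (σ, n)
  inj := by intro a b h; simpa using h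
  adj n := (SimpleGraph.fromRel_adj btRel _ _).mpr
    ⟨by simp, Or.inl (Or.inr (Or.inl ⟨σ, n, rfl, rfl⟩))⟩

/-- The underlying function of the ray `v_{R'_σ} R_σ`. -/
def vrFun (σ : ℕ → Bool) : ℕ → BTV
  | 0 => Sum.inr (σ, 0)
  | n + 1 => Sum.inl (pre2 σ n)

/-- The ray `v_{R'_σ} R_σ` of `GBT`: it starts at the first vertex of `R'_σ`
and then follows the rooted ray `R_σ` from the root. -/
def rayVR (σ : ℕ → Bool) : Ray GBT where
  f := vrFun σ
  inj := by
    intro a b h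
    match a, b with
    | 0, 0 => rfl
    | 0, n + 1 => simp [vrFun] at h
    | m + 1, 0 => simp [vrFun] at h
    | m + 1, n + 1 =>
      simp only [vrFun, Sum.inl.injEq] at h
      have := congrArg List.length h
      simp [pre2_length] at this
      omega
  adj n := by
    match n with
    | 0 =>
      exact (SimpleGraph.fromRel_adj btRel _ _).mpr
        ⟨by simp [vrFun], Or.inl (Or.inr (Or.inr ⟨σ, 0, rfl, rfl⟩))⟩
    | m + 1 =>
      refine (SimpleGraph.fromRel_adj btRel _ _).mpr ⟨?_, ?_⟩
      · simp only [vrFun, ne_eq, Sum.inl.injEq]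
        intro h
        have := congrArg List.length h
        simp [pre2_length] at this
      · exact Or.inl (Or.inl ⟨pre2 σ m, σ m, rfl, rfl⟩)



section Helpers

open SimpleGraph List

/-! ### `pre2` lemmas -/

lemma pre2_congr {σ τ : ℕ → Bool} : ∀ {N : ℕ}, (∀ k, k < N → τ k = σ k) → pre2 τ N = pre2 σ N := by
  intro N
  induction N with
  | zero => intro _; rfl
  | succ N ih =>
    intro hyp
    simp only [pre2]
    rw [ih (fun k hk => hyp k (by omega)), hyp N (by omega)]

lemma pre2_inj {σ τ : ℕ → Bool} : ∀ {N : ℕ}, pre2 τ N = pre2 σ N → ∀ k, k < N → τ k = σ k := by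
  intro N
  induction N with
  | zero => intro _ k hk; omega
  | succ N ih =>
    intro h k hk
    simp only [pre2] at h
    obtain ⟨h1, h2⟩ := List.append_inj' h rfl
    rcases Nat.lt_or_ge k N with hkN | hkN
    · exact ih h1 k hkN
    · have : k = N := by omega
      subst this
      simpa using h2

lemma pre2_prefix (σ : ℕ → Bool) {k n : ℕ} (h : k ≤ n) : pre2 σ k <+: pre2 σ n := by
  induction n with
  | zero =>
    have : k = 0 := by omega
    subst this; exact List.prefix_refl _
  | succ n ih =>
    rcases Nat.lt_or_ge k (n+1) with hk | hk
    · exact (ih (by omega)).trans (by simp [pre2])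
    · have : k = n + 1 := by omega
      subst this; exact List.prefix_refl _

lemma pre2_take (σ : ℕ → Bool) {k n : ℕ} (h : k ≤ n) : (pre2 σ n).take k = pre2 σ k := by
  have := (List.prefix_iff_eq_take).mp (pre2_prefix σ h)
  rw [pre2_length] at this
  exact this.symm

/-! ### adjacency inversion in `GBT` -/

lemma GBT_adj_inr {σ : ℕ → Bool} {m : ℕ} {y : BTV} (h : GBT.Adj (Sum.inr (σ, m)) y) :
    y = Sum.inr (σ, m + 1) ∨ (∃ k, m = k + 1 ∧ y = Sum.inr (σ, k)) ∨
      (m = 0 ∧ ∃ n, y = Sum.inl (pre2 σ n)) := by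
  rw [GBT, SimpleGraph.fromRel_adj] at h
  obtain ⟨-, h | h⟩ := h <;>
    rcases h with ⟨s, b, hx, hy⟩ | ⟨τ, n, hx, hy⟩ | ⟨τ, n, hx, hy⟩
  · exact absurd hx (by simp)
  · obtain ⟨rfl, rfl⟩ : τ = σ ∧ n = m := by
      have := hx.symm; simpa [Prod.ext_iff, eq_comm] using this
    exact Or.inl hy
  · obtain ⟨rfl, rfl⟩ : σ = τ ∧ m = 0 := by simpa [Prod.ext_iff] using hx
    exact Or.inr (Or.inr ⟨rfl, n, hy⟩)
  · exact absurd hy (by simp)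
  · obtain ⟨rfl, rfl⟩ : σ = τ ∧ m = n + 1 := by simpa [Prod.ext_iff] using hy
    exact Or.inr (Or.inl ⟨n, rfl, hx⟩)
  · exact absurd hy (by simp)

lemma GBT_adj_inl {s : List Bool} {y : BTV} (h : GBT.Adj (Sum.inl s) y) :
    (∃ b, y = Sum.inl (s ++ [b])) ∨ (∃ t b, s = t ++ [b] ∧ y = Sum.inl t) ∨
      (∃ τ n, s = pre2 τ n ∧ y = Sum.inr (τ, 0)) := by
  rw [GBT, SimpleGraph.fromRel_adj] at h
  obtain ⟨-, h | h⟩ := h <;>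
    rcases h with ⟨t, b, hx, hy⟩ | ⟨τ, n, hx, hy⟩ | ⟨τ, n, hx, hy⟩
  · obtain rfl : t = s := by simpa [eq_comm] using hx
    exact Or.inl ⟨b, hy⟩
  · exact absurd hx (by simp)
  · exact absurd hx (by simp)
  · obtain rfl : s = t ++ [b] := by simpa [eq_comm] using hy
    exact Or.inr (Or.inl ⟨t, b, rfl, hx⟩)
  · exact absurd hy (by simp)
  · obtain rfl : s = pre2 τ n := by simpa [eq_comm] using hy
    exact Or.inr (Or.inr ⟨τ, n, rfl, hx⟩)

end Helpers


section CompHelpers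

open SimpleGraph List

lemma dirComp_mono {G : SimpleGraph V} (f : G.end) {X Y : Finset V} (hXY : X ⊆ Y) :
    (dirComp f Y : Set V) ⊆ (dirComp f X : Set V) := by
  have h := f.2 (CategoryTheory.opHomOfLE hXY)
  rw [show dirComp f X = (dirComp f Y).hom (by exact_mod_cast hXY) from h.symm]
  exact SimpleGraph.ComponentCompl.subset_hom _ _

lemma dirComp_nonempty {G : SimpleGraph V} (f : G.end) (X : Finset V) :
    ((dirComp f X : G.ComponentCompl (X : Set V)) : Set V).Nonempty :=
  (dirComp f X).nonempty

/-- Components are contained in sets closed under adjacency avoiding `K`. -/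
lemma comp_closed {G : SimpleGraph V} {K : Set V} {S : Set V}
    (hS : ∀ u v, u ∈ S → v ∉ K → G.Adj u v → v ∈ S)
    {u : V} (hu : u ∉ K) (huS : u ∈ S) {C : G.ComponentCompl K}
    (hC : G.componentComplMk hu = C) {w : V} (hw : w ∈ (C : Set V)) : w ∈ S := by
  subst hC
  obtain ⟨hwK, hcomp⟩ := hw
  have hreach : (G.induce Kᶜ).Reachable ⟨u, hu⟩ ⟨w, hwK⟩ :=
    (SimpleGraph.ConnectedComponent.eq.mp hcomp).symm
  obtain ⟨p⟩ := hreach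
  suffices H : ∀ (a b : (Kᶜ : Set V)) (q : (G.induce Kᶜ).Walk a b), (a : V) ∈ S → (b : V) ∈ S from
    H _ _ p huS
  intro a b q
  induction q with
  | nil => exact id
  | @cons a c b ha q ih =>
    intro haS
    exact ih (hS _ _ haS c.2 ha)

lemma exists_bound (X : Finset BTV) (g : ℕ → BTV) (hg : Function.Injective g) :
    ∃ N, ∀ k, N ≤ k → g k ∉ X := by
  have hfin : {k | g k ∈ X}.Finite := Set.Finite.preimage hg.injOn X.finite_toSet
  obtain ⟨N, hN⟩ := hfin.bddAbove
  exact ⟨N + 1, fun k hk hmem => absurd (hN hmem) (by omega)⟩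

/-! ### special subsets of `BTV` -/

def raySet (σ : ℕ → Bool) : Set BTV := {x | ∃ m, x = Sum.inr (σ, m) ∧ 1 ≤ m}

def coneSet (σ : ℕ → Bool) (N : ℕ) : Set BTV :=
  {x | (∃ s, x = Sum.inl s ∧ pre2 σ N <+: s) ∨
       (∃ τ m, x = Sum.inr (τ, m) ∧ pre2 τ N = pre2 σ N ∧ τ ≠ σ)}

lemma raySet_closed (σ : ℕ → Bool) {K : Set BTV} (hK : (Sum.inr (σ, 0) : BTV) ∈ K) :
    ∀ u v, u ∈ raySet σ → v ∉ K → GBT.Adj u v → v ∈ raySet σ := by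
  rintro u v ⟨m, rfl, hm⟩ hv hadj
  rcases GBT_adj_inr hadj with rfl | ⟨k, rfl, rfl⟩ | ⟨rfl, -⟩
  · exact ⟨m + 1, rfl, by omega⟩
  · refine ⟨k, rfl, ?_⟩
    by_contra hk
    have : k = 0 := by omega
    subst this; exact hv hK
  · omega

lemma coneSet_closed (σ : ℕ → Bool) (N : ℕ) {K : Set BTV}
    (hK0 : (Sum.inr (σ, 0) : BTV) ∈ K)
    (hKt : ∀ k, k < N → (Sum.inl (pre2 σ k) : BTV) ∈ K) :
    ∀ u v, u ∈ coneSet σ N → v ∉ K → GBT.Adj u v → v ∈ coneSet σ N := by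
  rintro u v (⟨s, rfl, hpre⟩ | ⟨τ, m, rfl, hagree, hτ⟩) hv hadj
  · rcases GBT_adj_inl hadj with ⟨b, rfl⟩ | ⟨t, b, rfl, rfl⟩ | ⟨τ, n, rfl, rfl⟩
    · exact Or.inl ⟨_, rfl, hpre.trans (List.prefix_append _ _)⟩
    · rcases List.prefix_concat_iff.mp hpre with heq | hpre'
      · exfalso
        have hlen : N = t.length + 1 := by
          have := congrArg List.length heq
          simpa [pre2_length] using this
        have ht : t = pre2 σ t.length := by
          have h2 := congrArg (List.take t.length) heq
          rw [pre2_take σ (by omega)] at h2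
          simpa using h2.symm
        exact hv (ht ▸ hKt t.length (by omega))
      · exact Or.inl ⟨t, rfl, hpre'⟩
    · right
      have hn : N ≤ n := by
        have := hpre.length_le
        simpa [pre2_length] using this
      have hag : pre2 τ N = pre2 σ N := by
        have h1 : pre2 σ N = (pre2 τ n).take N := by
          have := List.prefix_iff_eq_take.mp hpre
          rwa [pre2_length] at this
        rw [pre2_take τ hn] at h1
        exact h1.symm
      refine ⟨τ, 0, rfl, hag, ?_⟩
      rintro rfl; exact hv hK0
  · rcases GBT_adj_inr hadj with rfl | ⟨k, rfl, rfl⟩ | ⟨rfl, n, rfl⟩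
    · exact Or.inr ⟨τ, m + 1, rfl, hagree, hτ⟩
    · exact Or.inr ⟨τ, k, rfl, hagree, hτ⟩
    · left
      rcases Nat.lt_or_ge n N with hn | hn
      case inr => exact ⟨_, rfl, hagree ▸ pre2_prefix τ hn⟩
      · exfalso
        have heq : pre2 τ n = pre2 σ n := by
          have h2 := congrArg (List.take n) hagree
          rwa [pre2_take τ (by omega), pre2_take σ (by omega)] at h2
        exact hv (heq ▸ hKt n hn)

/-! ### chains in components -/

lemma mem_chain_ray {K : Set BTV} {C : GBT.ComponentCompl K} {σ : ℕ → Bool} {m : ℕ}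
    (h0 : (Sum.inr (σ, m) : BTV) ∈ (C : Set BTV))
    (hK : ∀ k, m ≤ k → (Sum.inr (σ, k) : BTV) ∉ K) :
    ∀ k, m ≤ k → (Sum.inr (σ, k) : BTV) ∈ (C : Set BTV) := by
  intro k hk
  induction k, hk using Nat.le_induction with
  | base => exact h0
  | succ k hk ih =>
    exact SimpleGraph.ComponentCompl.mem_of_adj _ _ ih (hK (k + 1) (by omega)) ((rayR' σ).adj k)

lemma mem_chain_tree {K : Set BTV} {C : GBT.ComponentCompl K} {σ : ℕ → Bool} {m : ℕ}
    (h0 : (Sum.inl (pre2 σ m) : BTV) ∈ (C : Set BTV))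
    (hK : ∀ k, m ≤ k → (Sum.inl (pre2 σ k) : BTV) ∉ K) :
    ∀ k, m ≤ k → (Sum.inl (pre2 σ k) : BTV) ∈ (C : Set BTV) := by
  intro k hk
  induction k, hk using Nat.le_induction with
  | base => exact h0
  | succ k hk ih =>
    exact SimpleGraph.ComponentCompl.mem_of_adj _ _ ih (hK (k + 1) (by omega)) ((rayR σ).adj k)

end CompHelpers


section MainParts

open SimpleGraph List

lemma initSeg_rayR'_one (σ : ℕ → Bool) (x : BTV) :
    x ∈ (((rayR' σ).initSeg 1 : Finset BTV) : Set BTV) ↔ x = Sum.inr (σ, 0) := by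
  simp [Ray.initSeg, rayR', eq_comm]

lemma mem_initSeg_rayVR (σ : ℕ → Bool) (N : ℕ) (x : BTV) :
    x ∈ (((rayVR σ).initSeg (N + 1) : Finset BTV) : Set BTV) ↔
      x = Sum.inr (σ, 0) ∨ ∃ k, k < N ∧ x = Sum.inl (pre2 σ k) := by
  simp only [Ray.initSeg, Finset.coe_image, Finset.coe_range, Set.mem_image, Set.mem_Iio, rayVR]
  constructor
  · rintro ⟨k, hk, rfl⟩
    match k with
    | 0 => exact Or.inl rfl
    | j + 1 => exact Or.inr ⟨j, by omega, rfl⟩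
  · rintro (rfl | ⟨k, hk, rfl⟩)
    · exact ⟨0, by omega, rfl⟩
    · exact ⟨k + 1, by omega, rfl⟩

theorem dir_rayR' (σ : ℕ → Bool) : Directional (rayR' σ) := by
  rintro h ⟨X, hX⟩
  refine ⟨1, fun hT => hX ?_⟩
  obtain ⟨M, hM⟩ := hT
  have hmemM : (Sum.inr (σ, max M 1) : BTV) ∈ (dirComp h ((rayR' σ).initSeg 1) : Set BTV) :=
    hM _ (le_max_left _ _)
  obtain ⟨huK, hcomp⟩ := hmemM
  obtain ⟨N0, hN0⟩ := exists_bound X (fun k => (Sum.inr (σ, k) : BTV))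
    (by intro a b hab; simpa using hab)
  set N := max N0 1 with hNdef
  have hN0N : N0 ≤ N := le_max_left _ _
  have hN1 : 1 ≤ N := le_max_right _ _
  set Y := X ∪ (Finset.range N).image (fun k => (Sum.inr (σ, k) : BTV)) with hYdef
  have hK1Y : (rayR' σ).initSeg 1 ⊆ Y := by
    intro x hx
    have hx' := (initSeg_rayR'_one σ x).mp (Finset.mem_coe.mpr hx)
    subst hx'
    exact Finset.mem_union_right _ (Finset.mem_image.mpr ⟨0, Finset.mem_range.mpr (by omega), rfl⟩)
  obtain ⟨v, hv⟩ := dirComp_nonempty h Y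
  have hvC1 : v ∈ (dirComp h ((rayR' σ).initSeg 1) : Set BTV) := dirComp_mono h hK1Y hv
  obtain ⟨m, rfl, hm1⟩ :=
    comp_closed (raySet_closed σ ((initSeg_rayR'_one σ _).mpr rfl)) huK
      ⟨max M 1, rfl, le_max_right _ _⟩ hcomp hvC1
  have hvY : (Sum.inr (σ, m) : BTV) ∉ (↑Y : Set BTV) :=
    SimpleGraph.ComponentCompl.notMem_of_mem (SetLike.mem_coe.mp hv)
  have hmN : N ≤ m := by
    by_contra hc
    exact hvY (Finset.mem_coe.mpr
      (Finset.mem_union_right _ (Finset.mem_image.mpr ⟨m, Finset.mem_range.mpr (by omega), rfl⟩)))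
  have hnotY : ∀ k, m ≤ k → (Sum.inr (σ, k) : BTV) ∉ (↑Y : Set BTV) := by
    intro k hk hmem
    rw [hYdef, Finset.coe_union, Set.mem_union] at hmem
    rcases hmem with hmem | hmem
    · exact hN0 k (by omega) (Finset.mem_coe.mp hmem)
    · obtain ⟨j, hj, heq⟩ := Finset.mem_image.mp (Finset.mem_coe.mp hmem)
      obtain ⟨-, rfl⟩ : σ = σ ∧ j = k := by simpa [Prod.ext_iff] using heq
      rw [Finset.mem_range] at hj
      omega
  have tail := mem_chain_ray hv hnotY
  exact ⟨m, fun k hk => dirComp_mono h Finset.subset_union_left (tail k hk)⟩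

theorem not_equiv_R_R' (σ : ℕ → Bool) : ¬ RayEquiv GBT (rayR σ) (rayR' σ) := by
  intro hEq
  obtain ⟨C, hR, hR'⟩ := hEq {Sum.inr (σ, 0)}
  obtain ⟨M, hM⟩ := hR'
  obtain ⟨M2, hM2⟩ := hR
  obtain ⟨huK, hcomp⟩ := hM (max M 1) (le_max_left _ _)
  have hK : (Sum.inr (σ, 0) : BTV) ∈ (↑({Sum.inr (σ, 0)} : Finset BTV) : Set BTV) := by simp
  obtain ⟨m, hm, -⟩ :=
    comp_closed (raySet_closed σ hK) huK ⟨max M 1, rfl, le_max_right _ _⟩ hcomp (hM2 M2 le_rfl)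
  simp [rayR] at hm

/-- Length of the tree label of a vertex. -/
def lenOf : BTV → ℕ
  | Sum.inl s => s.length
  | Sum.inr _ => 0

/-- A witness for the deviation of the attached-ray label from `σ`. -/
noncomputable def devOf (σ : ℕ → Bool) : BTV → ℕ
  | Sum.inl _ => 0
  | Sum.inr (τ, _) => if hτ : ∃ j, τ j ≠ σ j then hτ.choose else 0

theorem dir_rayVR (σ : ℕ → Bool) : Directional (rayVR σ) := by
  classical
  rintro h ⟨X, hX⟩
  set N := X.sup lenOf + X.sup (devOf σ) + 1 with hNdef
  have hiX : ∀ s : List Bool, Sum.inl s ∈ X → s.length < N := by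
    intro s hs
    have h1 : lenOf (Sum.inl s) ≤ X.sup lenOf := Finset.le_sup hs
    simp only [lenOf] at h1
    omega
  have hiiX : ∀ (τ : ℕ → Bool) (m : ℕ), Sum.inr (τ, m) ∈ X → τ ≠ σ →
      pre2 τ N ≠ pre2 σ N := by
    intro τ m hmem hτ heq
    have hex : ∃ j, τ j ≠ σ j := by
      by_contra hc; push_neg at hc; exact hτ (funext hc)
    have hle : devOf σ (Sum.inr (τ, m)) ≤ X.sup (devOf σ) := Finset.le_sup hmem
    simp only [devOf, dif_pos hex] at hle
    exact hex.choose_spec (pre2_inj heq _ (by omega))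
  refine ⟨N + 1, fun hT => hX ?_⟩
  set K0 := (rayVR σ).initSeg (N + 1) with hK0def
  have hK0r : (Sum.inr (σ, 0) : BTV) ∈ (↑K0 : Set BTV) :=
    (mem_initSeg_rayVR σ N _).mpr (Or.inl rfl)
  have hK0t : ∀ k, k < N → (Sum.inl (pre2 σ k) : BTV) ∈ (↑K0 : Set BTV) :=
    fun k hk => (mem_initSeg_rayVR σ N _).mpr (Or.inr ⟨k, hk, rfl⟩)
  obtain ⟨M, hM⟩ := hT
  set L := max M N with hLdef
  have hML : M ≤ L := le_max_left _ _
  have hNL : N ≤ L := le_max_right _ _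
  have hu0 : (Sum.inl (pre2 σ L) : BTV) ∈ (dirComp h K0 : Set BTV) := hM (L + 1) (by omega)
  obtain ⟨hu0K, hu0comp⟩ := hu0
  have hu0S : (Sum.inl (pre2 σ L) : BTV) ∈ coneSet σ N :=
    Or.inl ⟨_, rfl, pre2_prefix σ hNL⟩
  set Y := X ∪ K0 with hYdef
  obtain ⟨v, hv⟩ := dirComp_nonempty h Y
  have hvD : v ∈ (dirComp h K0 : Set BTV) := dirComp_mono h Finset.subset_union_right hv
  have hvS : v ∈ coneSet σ N :=
    comp_closed (coneSet_closed σ N hK0r hK0t) hu0K hu0S hu0comp hvD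
  have hnotY : ∀ k, N ≤ k → (Sum.inl (pre2 σ k) : BTV) ∉ (↑Y : Set BTV) := by
    intro k hk hmem
    rw [hYdef, Finset.coe_union, Set.mem_union] at hmem
    rcases hmem with hmem | hmem
    · have := hiX _ (Finset.mem_coe.mp hmem)
      rw [pre2_length] at this
      omega
    · rcases (mem_initSeg_rayVR σ N _).mp hmem with heq | ⟨j, hj, heq⟩
      · simp at heq
      · obtain heq2 : pre2 σ k = pre2 σ j := by simpa using heq
        have := congrArg List.length heq2
        rw [pre2_length, pre2_length] at this
        omega
  have tailstep : (Sum.inl (pre2 σ N) : BTV) ∈ (dirComp h Y : Set BTV) →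
      (rayVR σ).TailIn (dirComp h X : Set BTV) := by
    intro hbase
    have tail := mem_chain_tree hbase hnotY
    refine ⟨N + 2, fun n hn => ?_⟩
    obtain ⟨j, rfl⟩ : ∃ j, n = j + 1 := ⟨n - 1, by omega⟩
    exact dirComp_mono h Finset.subset_union_left (tail j (by omega))
  rcases hvS with ⟨s, rfl, hpre⟩ | ⟨τ, m, rfl, hagree, hτ⟩
  · obtain ⟨d, hd⟩ := hpre
    have key : ∀ (d' r : List Bool), s = r ++ d' → pre2 σ N <+: r →
        (Sum.inl r : BTV) ∈ (dirComp h Y : Set BTV) := by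
      intro d'
      induction d' with
      | nil =>
        intro r hr _
        rw [List.append_nil] at hr
        subst hr
        exact hv
      | cons b d' ih =>
        intro r hr hpr
        have h1 : (Sum.inl (r ++ [b]) : BTV) ∈ (dirComp h Y : Set BTV) :=
          ih (r ++ [b]) (by rw [hr]; simp) (hpr.trans (List.prefix_append _ _))
        have hlen : N ≤ r.length := by
          have := hpr.length_le
          rwa [pre2_length] at this
        have hrY : (Sum.inl r : BTV) ∉ (↑Y : Set BTV) := by
          intro hmem
          rw [hYdef, Finset.coe_union, Set.mem_union] at hmem
          rcases hmem with hmem | hmem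
          · exact absurd (hiX _ (Finset.mem_coe.mp hmem)) (by omega)
          · rcases (mem_initSeg_rayVR σ N _).mp hmem with heq | ⟨j, hj, heq⟩
            · simp at heq
            · obtain rfl : r = pre2 σ j := by simpa using heq
              rw [pre2_length] at hlen
              omega
        have hadj : GBT.Adj (Sum.inl (r ++ [b])) (Sum.inl r) := by
          refine (SimpleGraph.fromRel_adj btRel _ _).mpr ⟨?_, Or.inr (Or.inl ⟨r, b, rfl, rfl⟩)⟩
          intro hEq
          have := congrArg (fun x : BTV => Sum.elim List.length (fun _ => 0) x) hEq
          simp at this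
        exact SimpleGraph.ComponentCompl.mem_of_adj _ _ h1 hrY hadj
    exact tailstep (key d (pre2 σ N) hd.symm (List.prefix_refl _))
  · have hτY : ∀ j, (Sum.inr (τ, j) : BTV) ∉ (↑Y : Set BTV) := by
      intro j hmem
      rw [hYdef, Finset.coe_union, Set.mem_union] at hmem
      rcases hmem with hmem | hmem
      · exact hiiX τ j (Finset.mem_coe.mp hmem) hτ hagree
      · rcases (mem_initSeg_rayVR σ N _).mp hmem with heq | ⟨k, hk, heq⟩
        · obtain ⟨rfl, -⟩ : τ = σ ∧ j = 0 := by simpa [Prod.ext_iff] using heq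
          exact hτ rfl
        · simp at heq
    have hdown : ∀ i, (Sum.inr (τ, m - i) : BTV) ∈ (dirComp h Y : Set BTV) := by
      intro i
      induction i with
      | zero => simpa using hv
      | succ i ih =>
        by_cases hc : m - i = 0
        · have he : m - (i + 1) = m - i := by omega
          rw [he]; exact ih
        · have hstep : m - i = (m - (i + 1)) + 1 := by omega
          rw [hstep] at ih
          exact SimpleGraph.ComponentCompl.mem_of_adj _ _ ih (hτY _)
            ((rayR' τ).adj (m - (i + 1))).symm
    have h0 : (Sum.inr (τ, 0) : BTV) ∈ (dirComp h Y : Set BTV) := by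
      have := hdown m
      simpa using this
    have hNmem : (Sum.inl (pre2 τ N) : BTV) ∈ (dirComp h Y : Set BTV) := by
      have hnot : (Sum.inl (pre2 τ N) : BTV) ∉ (↑Y : Set BTV) := by
        rw [hagree]; exact hnotY N le_rfl
      have hadj : GBT.Adj (Sum.inr (τ, 0)) (Sum.inl (pre2 τ N)) :=
        (SimpleGraph.fromRel_adj btRel _ _).mpr
          ⟨by simp, Or.inl (Or.inr (Or.inr ⟨τ, N, rfl, rfl⟩))⟩
      exact SimpleGraph.ComponentCompl.mem_of_adj _ _ h0 hnot hadj
    rw [hagree] at hNmem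
    exact tailstep hNmem

end MainParts

/-- In `GBT`, for every rooted ray `R_σ` of `T₂` the two rays `R'_σ` and
`v_{R'_σ} R_σ` are directional, and the ends represented by `R_σ` and by
`R'_σ` are distinct ends of `GBT`. -/
theorem stmt_12 (σ : ℕ → Bool) :
    Directional (rayR' σ) ∧ Directional (rayVR σ) ∧
    ¬ RayEquiv GBT (rayR σ) (rayR' σ) :=
  ⟨dir_rayR' σ, dir_rayVR σ, not_equiv_R_R' σ⟩
end

section
/- There exists a graph G whose end space is second countable although G contains uncountably many rays that pairwise meet precisely in their common first vertex and represent pairwise distinct ends of G. -/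
/-! Common definitions: rays, ends (à la Halin), the end space, directions
(via Mathlib's `SimpleGraph.end`), domination, generalised paths, etc. -/

open Classical SimpleGraph

universe u

variable {V : Type u}

/-! ### Auxiliary general lemmas -/


section Aux

variable {G : SimpleGraph V}

theorem Ray.tail_unique {X : Set V} {R : Ray G} {C C' : G.ComponentCompl X}
    (h : R.TailIn C) (h' : R.TailIn C') : C = C' := by
  obtain ⟨N, hN⟩ := h
  obtain ⟨N', hN'⟩ := h'
  have h1 : R.f (max N N') ∈ C := hN _ (le_max_left _ _)
  have h2 : R.f (max N N') ∈ C' := hN' _ (le_max_right _ _)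
  obtain ⟨hv, e⟩ := h1
  obtain ⟨hv', e'⟩ := h2
  rw [← e, ← e']

theorem Ray.eventually_not_mem (R : Ray G) (X : Finset V) :
    ∃ N, ∀ n, N ≤ n → R.f n ∉ (X : Set V) := by
  have hfin : {n | R.f n ∈ (X : Set V)}.Finite := X.finite_toSet.preimage R.inj.injOn
  obtain ⟨N, hN⟩ := hfin.bddAbove
  exact ⟨N + 1, fun n hn hmem => by have := hN hmem; omega⟩

theorem Ray.exists_tailIn (R : Ray G) (X : Finset V) :
    ∃ (N : ℕ) (h : R.f N ∉ (X : Set V)),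
      R.TailIn (G.componentComplMk h : Set V) := by
  obtain ⟨N, hN⟩ := R.eventually_not_mem X
  refine ⟨N, hN N le_rfl, N, ?_⟩
  intro n hn
  induction n, hn using Nat.le_induction with
  | base => exact G.componentComplMk_mem _
  | succ n hn ih =>
    obtain ⟨h', e⟩ := ih
    exact ⟨hN (n+1) (by omega), by
      rw [G.componentComplMk_eq_of_adj (hN (n+1) (by omega)) h' (R.adj n).symm, e]⟩

theorem rayEquiv_refl (R : Ray G) : RayEquiv G R R := by
  intro X
  obtain ⟨N, h, ht⟩ := R.exists_tailIn X
  exact ⟨_, ht, ht⟩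

theorem end_lives (R : Ray G) (X : Finset V) :
    ∃ C : G.ComponentCompl (X : Set V), R.TailIn C ∧ LivesIn (R.end G) X C := by
  obtain ⟨N, h, ht⟩ := R.exists_tailIn X
  refine ⟨_, ht, ?_⟩
  intro S hS
  obtain ⟨C', hR, hSt⟩ := hS X
  rwa [Ray.tail_unique hR ht] at hSt

end Aux


/-! ### The construction -/

namespace Stmt17Aux

abbrev J : Type := ℕ → Bool
inductive Vtx : Type
  | pt : Vtx
  | node : List Bool → Vtx
  | ray : J → ℕ → Vtx
open Vtx
def pre (i : J) (k : ℕ) : List Bool := (List.range k).map i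
@[simp] lemma pre_length (i : J) (k : ℕ) : (pre i k).length = k := by simp [pre]
lemma pre_take (i : J) {m k : ℕ} (h : m ≤ k) : (pre i k).take m = pre i m := by
  simp [pre, ← List.map_take, List.take_range, Nat.min_eq_left h]
lemma pre_succ (i : J) (k : ℕ) : pre i (k + 1) = pre i k ++ [i k] := by
  simp [pre, List.range_succ]
inductive Rel : Vtx → Vtx → Prop
  | base (i : J) : Rel pt (ray i 0)
  | step (i : J) (n : ℕ) : Rel (ray i n) (ray i (n + 1))
  | attach (i : J) (n k : ℕ) (h : n + 1 ≤ k) : Rel (ray i n) (node (pre i k))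
  | tree (t : List Bool) (b : Bool) : Rel (node t) (node (t ++ [b]))
lemma Rel.ne {v w : Vtx} (h : Rel v w) : v ≠ w := by
  cases h with
  | base i => simp
  | step i n => intro e; injection e with _ e2; omega
  | attach i n k h => simp
  | tree t b => intro e; injection e with e; have := congrArg List.length e; simp at this
def Gr : SimpleGraph Vtx where
  Adj x y := Rel x y ∨ Rel y x
  symm := ⟨fun x y h => h.symm⟩
  loopless := ⟨by rintro x (h | h) <;> exact h.ne rfl⟩

/-- the finite separators -/
def Sd (d : ℕ) : Set Vtx := {v | v = pt ∨ ∃ t : List Bool, t.length ≤ d ∧ v = node t}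

lemma Sd_finite (d : ℕ) : (Sd d).Finite := by
  have h1 : Sd d ⊆ insert pt (node '' {t : List Bool | t.length ≤ d}) := by
    rintro v (rfl | ⟨t, ht, rfl⟩)
    · exact Set.mem_insert _ _
    · exact Set.mem_insert_of_mem _ ⟨t, ht, rfl⟩
  exact (((List.finite_length_le Bool d).image node).insert pt).subset h1

noncomputable def XdF (d : ℕ) : Finset Vtx := (Sd_finite d).toFinset

@[simp] lemma coe_XdF (d : ℕ) : (XdF d : Set Vtx) = Sd d := (Sd_finite d).coe_toFinset

lemma node_not_mem_Sd {d : ℕ} {t : List Bool} (h : d + 1 ≤ t.length) : node t ∉ Sd d := by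
  rintro (e | ⟨t', ht', e⟩)
  · cases e
  · injection e with e; subst e; omega

lemma ray_not_mem_Sd {d : ℕ} (i : J) (n : ℕ) : ray i n ∉ Sd d := by
  rintro (e | ⟨t', ht', e⟩) <;> cases e

/-- colour of a vertex -/
def gg (d : ℕ) : Vtx → List Bool
  | pt => []
  | node t => t.take (d + 1)
  | ray i _ => pre i (d + 1)

lemma gg_rel {d : ℕ} {v w : Vtx} (hv : v ∉ Sd d) (hw : w ∉ Sd d) (h : Rel v w) :
    gg d v = gg d w := by
  cases h with
  | base i => exact absurd (Or.inl rfl) hv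
  | step i n => rfl
  | attach i n k hk =>
    have hlen : ¬ (pre i k).length ≤ d := fun hl => hw (Or.inr ⟨_, hl, rfl⟩)
    rw [pre_length] at hlen
    show pre i (d + 1) = (pre i k).take (d + 1)
    rw [pre_take i (by omega)]
  | tree t b =>
    have hlen : ¬ t.length ≤ d := fun hl => hv (Or.inr ⟨_, hl, rfl⟩)
    show t.take (d + 1) = (t ++ [b]).take (d + 1)
    rw [List.take_append_of_le_length (by omega)]

lemma gg_adj {d : ℕ} {v w : Vtx} (hv : v ∉ Sd d) (hw : w ∉ Sd d) (h : Gr.Adj v w) :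
    gg d v = gg d w := by
  rcases h with h | h
  · exact gg_rel hv hw h
  · exact (gg_rel hw hv h).symm

noncomputable def gcomp (d : ℕ) : Gr.ComponentCompl ((XdF d : Set Vtx)) → List Bool :=
  ComponentCompl.lift (fun v _ => gg d v)
    (fun v w hv hw hadj =>
      gg_adj (by rw [coe_XdF] at hv; exact hv) (by rw [coe_XdF] at hw; exact hw) hadj)

lemma gcomp_mk (d : ℕ) {v : Vtx} (hv : v ∉ (XdF d : Set Vtx)) :
    gcomp d (Gr.componentComplMk hv) = gg d v := rfl

lemma mem_comp_gg {d : ℕ} {C : Gr.ComponentCompl ((XdF d : Set Vtx))} {v : Vtx}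
    (hv : v ∈ (C : Set Vtx)) : gg d v = gcomp d C := by
  obtain ⟨h, e⟩ := hv
  rw [← e, gcomp_mk]



lemma mk_congr {K : Set Vtx} {v w : Vtx} (hv : v ∉ K) (hw : w ∉ K) (h : v = w) :
    Gr.componentComplMk hv = Gr.componentComplMk hw := by subst h; rfl

lemma descend {d : ℕ} {K : Set Vtx} (hK : ∀ t : List Bool, d + 1 ≤ t.length → node t ∉ K)
    (t : List Bool) (ht : d + 1 ≤ t.length) :
    Gr.componentComplMk (hK t ht) =
      Gr.componentComplMk (hK (t.take (d + 1)) (by rw [List.length_take]; omega)) := by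
  induction t using List.reverseRecOn with
  | nil => simp at ht
  | append_singleton t b ih =>
    by_cases h : d + 1 ≤ t.length
    · have e : (t ++ [b]).take (d + 1) = t.take (d + 1) := List.take_append_of_le_length h
      have step : Gr.componentComplMk (hK (t ++ [b]) ht) = Gr.componentComplMk (hK t h) :=
        Gr.componentComplMk_eq_of_adj _ _ (Or.inr (Rel.tree t b))
      rw [step, ih h]
      exact mk_congr _ _ (congrArg node e.symm)
    · have e : (t ++ [b]).take (d + 1) = t ++ [b] :=
        List.take_of_length_le (by simp at ht ⊢; omega)
      exact mk_congr _ _ (congrArg node e.symm)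

lemma to_hub {d : ℕ} {K : Set Vtx} (hK : ∀ t : List Bool, d + 1 ≤ t.length → node t ∉ K)
    {v : Vtx} (hv : v ∉ K) (h0 : v ≠ pt)
    (hlen : ∀ t, v = node t → d + 1 ≤ t.length) :
    ∃ h : node (gg d v) ∉ K, Gr.componentComplMk hv = Gr.componentComplMk h := by
  cases v with
  | pt => exact absurd rfl h0
  | node t =>
    have hl : d + 1 ≤ t.length := hlen t rfl
    exact ⟨hK _ (by simp only [gg, List.length_take]; omega), descend hK t hl⟩
  | ray i n =>
    have hkk : n + 1 ≤ max (n + 1) (d + 1) := le_max_left _ _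
    have h1 : node (pre i (max (n + 1) (d + 1))) ∉ K := hK _ (by simp only [pre_length]; omega)
    have step : Gr.componentComplMk hv = Gr.componentComplMk h1 :=
      Gr.componentComplMk_eq_of_adj _ _ (Or.inl (Rel.attach i n _ hkk))
    have h2 := descend hK (pre i (max (n + 1) (d + 1))) (by simp only [pre_length]; omega)
    have e : (pre i (max (n + 1) (d + 1))).take (d + 1) = pre i (d + 1) :=
      pre_take i (le_max_right _ _)
    exact ⟨hK _ (by simp only [gg, pre_length]; omega), by rw [step, h2]; exact mk_congr _ _ (congrArg node e)⟩

lemma not_mem_Sd_cases {d : ℕ} {v : Vtx} (hv : v ∉ Sd d) :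
    v ≠ pt ∧ ∀ t, v = node t → d + 1 ≤ t.length := by
  constructor
  · rintro rfl; exact hv (Or.inl rfl)
  · rintro t rfl
    by_contra h
    exact hv (Or.inr ⟨t, by omega, rfl⟩)

lemma into_hub {d : ℕ} {K : Set Vtx} (hK : ∀ t : List Bool, d + 1 ≤ t.length → node t ∉ K)
    {C₂ : Gr.ComponentCompl ((XdF d : Set Vtx))} {v : Vtx}
    (hvC₂ : v ∈ (C₂ : Set Vtx)) (hvK : v ∉ K) :
    ∃ h : node (gcomp d C₂) ∉ K, Gr.componentComplMk hvK = Gr.componentComplMk h := by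
  obtain ⟨hvS, hmk⟩ := id hvC₂
  rw [coe_XdF] at hvS
  obtain ⟨h0, hlen⟩ := not_mem_Sd_cases hvS
  obtain ⟨hh, he⟩ := to_hub hK hvK h0 hlen
  have e : gg d v = gcomp d C₂ := mem_comp_gg ⟨coe_XdF d ▸ hvS, hmk⟩
  exact ⟨e ▸ hh, he.trans (mk_congr _ _ (congrArg node e))⟩

lemma gcomp_length {d : ℕ} (C₂ : Gr.ComponentCompl ((XdF d : Set Vtx))) :
    (gcomp d C₂).length = d + 1 := by
  obtain ⟨v, hv, e⟩ := C₂.exists_eq_mk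
  rw [← e, gcomp_mk]
  rw [coe_XdF] at hv
  obtain ⟨h0, hlen⟩ := not_mem_Sd_cases hv
  cases v with
  | pt => exact absurd rfl h0
  | node t => have := hlen t rfl; show (t.take (d+1)).length = d + 1; rw [List.length_take]; omega
  | ray i n => simp [gg]



def rayFun (i : J) : ℕ → Vtx
  | 0 => pt
  | n + 1 => ray i n

def Rw (i : J) : Ray Gr where
  f := rayFun i
  inj := by
    intro m n h
    match m, n with
    | 0, 0 => rfl
    | 0, n + 1 => exact absurd h (by simp [rayFun])
    | m + 1, 0 => exact absurd h (by simp [rayFun])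
    | m + 1, n + 1 =>
      simp only [rayFun] at h
      injection h with _ h2
      omega
  adj := by
    intro n
    match n with
    | 0 => exact Or.inl (Rel.base i)
    | n + 1 => exact Or.inl (Rel.step i n)

lemma Rw_first (i : J) : (Rw i).f 0 = pt := rfl

lemma Rw_range_inter {i j : J} (h : i ≠ j) :
    Set.range (Rw i).f ∩ Set.range (Rw j).f = {pt} := by
  ext x
  simp only [Set.mem_inter_iff, Set.mem_range, Set.mem_singleton_iff]
  constructor
  · rintro ⟨⟨n, rfl⟩, ⟨m, hm⟩⟩
    match n, m with
    | 0, _ => rfl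
    | n + 1, 0 => exact absurd hm (by simp [Rw, rayFun])
    | n + 1, m + 1 =>
      have hm' : ray j m = ray i n := hm
      injection hm' with e1 _
      exact absurd e1.symm h
  · rintro rfl
    exact ⟨⟨0, rfl⟩, ⟨0, rfl⟩⟩

lemma Rw_not_equiv {i j : J} (h : i ≠ j) : ¬ RayEquiv Gr (Rw i) (Rw j) := by
  obtain ⟨m, hm⟩ : ∃ m, i m ≠ j m := by
    by_contra h'
    push_neg at h'
    exact h (funext h')
  intro he
  obtain ⟨C, hi, hj⟩ := he (XdF m)
  obtain ⟨N, hN⟩ := hi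
  obtain ⟨M, hM⟩ := hj
  have h1 : gg m (ray i N) = gcomp m C := mem_comp_gg (hN (N + 1) (by omega))
  have h2 : gg m (ray j M) = gcomp m C := mem_comp_gg (hM (M + 1) (by omega))
  have e : pre i (m + 1) = pre j (m + 1) := h1.trans h2.symm
  rw [pre_succ, pre_succ] at e
  have e2 := congrArg List.getLast? e
  rw [List.getLast?_concat, List.getLast?_concat] at e2
  exact hm (Option.some_injective _ e2)

lemma uncountable_J : Uncountable J := by
  rw [← not_countable_iff]
  intro h
  have h1 : Function.Injective (fun (s : Set ℕ) (n : ℕ) => @decide (n ∈ s) (Classical.dec _)) := by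
    intro s t h'
    ext n
    have := congrFun h' n
    simp only [decide_eq_decide] at this
    exact this
  have h2 : Countable (Set ℕ) := h1.countable
  obtain ⟨f, hf⟩ := h2.exists_injective_nat'
  exact Function.cantor_injective f hf

/-! ### Second countability -/

noncomputable def bSet : ℕ × List Bool → Set (Ends Gr) := fun p =>
  if h : node p.2 ∉ (XdF p.1 : Set Vtx) then basicSet Gr (XdF p.1) (Gr.componentComplMk h)
  else ∅

lemma refine (X : Finset Vtx) (C : Gr.ComponentCompl (X : Set Vtx)) (ω : Ends Gr)
    (hω : ω ∈ basicSet Gr X C) :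
    ∃ p : ℕ × List Bool, ω ∈ bSet p ∧ bSet p ⊆ basicSet Gr X C := by
  classical
  obtain ⟨R0, hR0⟩ := ω.2
  have hωe : ω = R0.end Gr := Subtype.ext hR0
  have hR0mem : R0 ∈ ω.1 := by rw [hR0]; exact rayEquiv_refl R0
  -- depth bound for X
  set d : ℕ := X.sup (fun v => match v with | node t => t.length | _ => 0) with hd
  have hXd : ∀ t : List Bool, node t ∈ X → t.length ≤ d := by
    intro t ht
    have := Finset.le_sup (f := fun v : Vtx => match v with | node t => t.length | _ => 0) ht
    simpa using this
  have hXK : ∀ t : List Bool, d + 1 ≤ t.length → node t ∉ (X : Set Vtx) := by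
    intro t hl hmem
    have := hXd t (by exact_mod_cast hmem)
    omega
  have hSdK : ∀ t : List Bool, d + 1 ≤ t.length → node t ∉ ((XdF d : Finset Vtx) : Set Vtx) := by
    intro t hl
    rw [coe_XdF]
    exact node_not_mem_Sd hl
  -- the component of ω outside XdF d
  obtain ⟨C₂, hC₂tail, hC₂lives⟩ := end_lives R0 (XdF d)
  set s := gcomp d C₂ with hs
  -- a vertex of R0 in C₂
  obtain ⟨N₀, hN₀⟩ := hC₂tail
  have hv : R0.f N₀ ∈ (C₂ : Set Vtx) := hN₀ N₀ le_rfl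
  obtain ⟨hvK, hvC⟩ := id hv
  -- C₂ is the component of the hub
  obtain ⟨hhub, hhubeq⟩ := into_hub hSdK hv hvK
  have hC₂hub : Gr.componentComplMk hhub = C₂ := by rw [← hhubeq, hvC]
  have hωbasic : ω ∈ basicSet Gr (XdF d) C₂ := by rw [hωe]; exact hC₂lives
  refine ⟨(d, s), ?_, ?_⟩
  · show ω ∈ bSet (d, s)
    rw [show bSet (d, s) = basicSet Gr (XdF d) (Gr.componentComplMk hhub) from dif_pos hhub,
      hC₂hub]
    exact hωbasic
  · -- the inclusion
    rw [show bSet (d, s) = basicSet Gr (XdF d) (Gr.componentComplMk hhub) from dif_pos hhub,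
      hC₂hub]
    intro ω' hω'
    -- the hub component in G - X is C
    have hRC : R0.TailIn (C : Set Vtx) := hω R0 hR0mem
    obtain ⟨N₃, hN₃⟩ := hRC
    obtain ⟨N₄, hN₄⟩ := R0.eventually_not_mem X
    set n := max (max N₀ N₃) N₄ with hn
    have hvC₂' : R0.f n ∈ (C₂ : Set Vtx) := hN₀ n (by omega)
    have hvC' : R0.f n ∈ (C : Set Vtx) := hN₃ n (by omega)
    have hvX : R0.f n ∉ (X : Set Vtx) := hN₄ n (by omega)
    obtain ⟨hsX, hbridge⟩ := into_hub hXK hvC₂' hvX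
    obtain ⟨hvX', hvCeq⟩ := id hvC'
    have hCeq : Gr.componentComplMk hsX = C := by rw [← hbridge, hvCeq]
    -- now every ray of ω' has a tail in C
    intro S hS
    have hS2 : S.TailIn (C₂ : Set Vtx) := hω' S hS
    obtain ⟨N₁, hN₁⟩ := hS2
    obtain ⟨N₂, hN₂⟩ := S.eventually_not_mem X
    refine ⟨max N₁ N₂, fun k hk => ?_⟩
    have hk1 : S.f k ∈ (C₂ : Set Vtx) := hN₁ k (by omega)
    have hk2 : S.f k ∉ (X : Set Vtx) := hN₂ k (by omega)
    obtain ⟨hsX2, heq2⟩ := into_hub hXK hk1 hk2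
    exact ⟨hk2, by rw [heq2, ← hCeq]⟩

lemma second_countable : SecondCountableTopology (Ends Gr) := by
  refine ⟨Set.range bSet, Set.countable_range _, ?_⟩
  refine le_antisymm ?_ ?_
  · -- endsTopology ≤ generateFrom (range bSet)
    apply le_generateFrom
    rintro U ⟨p, rfl⟩
    by_cases h : node p.2 ∉ (XdF p.1 : Set Vtx)
    · rw [show bSet p = basicSet Gr (XdF p.1) (Gr.componentComplMk h) from dif_pos h]
      exact TopologicalSpace.isOpen_generateFrom_of_mem ⟨XdF p.1, Gr.componentComplMk h, rfl⟩
    · rw [show bSet p = ∅ from dif_neg h]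
      exact isOpen_empty
  · -- generateFrom (range bSet) ≤ endsTopology
    apply le_generateFrom
    rintro U ⟨X, C, rfl⟩
    have hU : basicSet Gr X C =
        ⋃₀ {W | W ∈ Set.range bSet ∧ W ⊆ basicSet Gr X C} := by
      apply Set.Subset.antisymm
      · intro ω hω
        obtain ⟨p, hp1, hp2⟩ := refine X C ω hω
        exact ⟨bSet p, ⟨⟨p, rfl⟩, hp2⟩, hp1⟩
      · exact Set.sUnion_subset fun W hW => hW.2
    rw [hU]
    exact TopologicalSpace.GenerateOpen.sUnion _
      (fun W hW => TopologicalSpace.GenerateOpen.basic _ hW.1)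

end Stmt17Aux

/-- There is a graph with second countable end space containing uncountably
many rays that pairwise meet precisely in their common first vertex and
represent pairwise distinct ends. -/
theorem stmt_17 :
    ∃ (V : Type) (G : SimpleGraph V),
      SecondCountableTopology (Ends G) ∧
      ∃ (v₀ : V) (I : Type) (_ : Uncountable I) (R : I → Ray G),
        (∀ i, (R i).f 0 = v₀) ∧
        (∀ i j, i ≠ j → Set.range (R i).f ∩ Set.range (R j).f = {v₀}) ∧
        (∀ i j, i ≠ j → ¬ RayEquiv G (R i) (R j)) := by
  refine ⟨Stmt17Aux.Vtx, Stmt17Aux.Gr, Stmt17Aux.second_countable, Stmt17Aux.Vtx.pt,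
    Stmt17Aux.J, Stmt17Aux.uncountable_J, Stmt17Aux.Rw, fun i => rfl,
    fun i j h => Stmt17Aux.Rw_range_inter h, fun i j h => Stmt17Aux.Rw_not_equiv h⟩
end
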